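/- Let V = (v₁,…,v_N) be an m×N real matrix, let S ⊆ [N] with |S| = s, set k = ⌈s/2⌉, and let Π be any orthogonal projection in ℝ^m of rank m − k + 1. Then (1/s) Σ_{i∈S} ‖Π v_i‖₂² ≥ σ_min(V|_S)²/2; in particular there exists i ∈ S with ‖Π v_i‖₂² ≥ σ_min(V|_S)²/2. -/

import Mathlib

open Matrix
open scoped BigOperators

/-- The Euclidean norm of a vector. -/
noncomputable def enorm {ι : Type*} [Fintype ι] (v : ι → ℝ) : ℝ :=
  Real.sqrt (∑ i, (v i) ^ 2)

/-- The least singular value of a matrix. -/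
noncomputable def smin {ι κ : Type*} [Fintype ι] [Fintype κ] (B : Matrix ι κ ℝ) : ℝ :=
  ⨅ x : {x : κ → ℝ // _root_.enorm x = 1}, _root_.enorm (B.mulVec x)

/-- The submatrix of columns of `A` indexed by the finite set `S`. -/
def colSub {ι κ : Type*} (A : Matrix ι κ ℝ) (S : Finset κ) : Matrix ι {j // j ∈ S} ℝ :=
  A.submatrix id fun j => (j : κ)

lemma enorm_nonneg {ι : Type*} [Fintype ι] (v : ι → ℝ) : 0 ≤ _root_.enorm v :=
  Real.sqrt_nonneg _

lemma enorm_sq {ι : Type*} [Fintype ι] (v : ι → ℝ) : _root_.enorm v ^ 2 = ∑ i, (v i) ^ 2 :=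
  Real.sq_sqrt (Finset.sum_nonneg fun i _ => sq_nonneg _)

lemma enorm_eq_norm {ι : Type*} [Fintype ι] (v : ι → ℝ) :
    _root_.enorm v = ‖(WithLp.equiv 2 (ι → ℝ)).symm v‖ := by
  rw [EuclideanSpace.norm_eq]
  simp [_root_.enorm, Real.norm_eq_abs, sq_abs, WithLp.equiv_symm_apply, PiLp.toLp_apply]

lemma enorm_smul' {ι : Type*} [Fintype ι] (c : ℝ) (v : ι → ℝ) :
    _root_.enorm (c • v) = |c| * _root_.enorm v := by
  simp only [_root_.enorm, Pi.smul_apply, smul_eq_mul, mul_pow]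
  rw [← Finset.mul_sum, Real.sqrt_mul (sq_nonneg c), Real.sqrt_sq_eq_abs]

lemma smin_nonneg {ι κ : Type*} [Fintype ι] [Fintype κ] (B : Matrix ι κ ℝ) :
    0 ≤ smin B := by
  rcases isEmpty_or_nonempty {x : κ → ℝ // _root_.enorm x = 1} with h | h
  · simp [smin, Real.iInf_of_isEmpty]
  · exact le_ciInf fun x => enorm_nonneg _

lemma smin_le_enorm_mulVec {ι κ : Type*} [Fintype ι] [Fintype κ] (B : Matrix ι κ ℝ)
    (x : κ → ℝ) : smin B * _root_.enorm x ≤ _root_.enorm (B.mulVec x) := by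
  by_cases hx : _root_.enorm x = 0
  · rw [hx, mul_zero]; exact enorm_nonneg _
  · have hxpos : 0 < _root_.enorm x := lt_of_le_of_ne (enorm_nonneg x) (Ne.symm hx)
    set c : ℝ := (_root_.enorm x)⁻¹ with hc
    have hcpos : 0 < c := inv_pos.mpr hxpos
    have hu : _root_.enorm (c • x) = 1 := by
      rw [enorm_smul', abs_of_pos hcpos, hc, inv_mul_cancel₀ hx]
    have hbdd : BddBelow (Set.range fun y : {y : κ → ℝ // _root_.enorm y = 1} =>
        _root_.enorm (B.mulVec (y : κ → ℝ))) := by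
      refine ⟨0, ?_⟩
      rintro _ ⟨y, rfl⟩
      exact enorm_nonneg _
    have h1 : smin B ≤ _root_.enorm (B.mulVec (c • x)) := ciInf_le hbdd ⟨c • x, hu⟩
    have h2 : _root_.enorm (B.mulVec (c • x)) = c * _root_.enorm (B.mulVec x) := by
      rw [Matrix.mulVec_smul]
      show _root_.enorm (c • B.mulVec x) = c * _root_.enorm (B.mulVec x)
      rw [enorm_smul', abs_of_pos hcpos]
    rw [h2] at h1
    calc smin B * _root_.enorm x ≤ (c * _root_.enorm (B.mulVec x)) * _root_.enorm x :=
          mul_le_mul_of_nonneg_right h1 (le_of_lt hxpos)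
      _ = _root_.enorm (B.mulVec x) := by
          rw [hc, mul_comm, ← mul_assoc, mul_inv_cancel₀ hx, one_mul]

/-- For `S ⊆ [N]` with `|S| = s`, `k = ⌈s/2⌉`, and any orthogonal projection `Pr` of rank
`m − k + 1`, the average of `‖Pr v_i‖₂²` over `i ∈ S` is at least `σ_min(V|_S)²/2`; in
particular some `i ∈ S` has `‖Pr v_i‖₂² ≥ σ_min(V|_S)²/2`. -/
theorem projection_preserves_smin {m N : ℕ} (V : Matrix (Fin m) (Fin N) ℝ)
    (S : Finset (Fin N)) (s : ℕ) (hs : s = S.card) (hs0 : 0 < s)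
    (k : ℕ) (hk : k = (s + 1) / 2) (hkm : k ≤ m)
    (Pr : Matrix (Fin m) (Fin m) ℝ) (hproj : Pr * Pr = Pr) (hsymm : Prᵀ = Pr)
    (hrank : Pr.rank = m - k + 1) :
    smin (colSub V S) ^ 2 / 2 ≤
        (1 / (s : ℝ)) * ∑ i ∈ S, _root_.enorm (Pr.mulVec fun l => V l i) ^ 2 ∧
      ∃ i ∈ S, smin (colSub V S) ^ 2 / 2 ≤ _root_.enorm (Pr.mulVec fun l => V l i) ^ 2 := by
  classical
  set A : Matrix (Fin m) {j // j ∈ S} ℝ := colSub V S with hA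
  set σ : ℝ := smin A with hσ
  set Q : Matrix (Fin m) (Fin m) ℝ := 1 - Pr with hQdef
  set C : Matrix (Fin m) {j // j ∈ S} ℝ := Pr * A with hC
  have hk1 : 1 ≤ k := by omega
  -- rank of Q
  have hPrQ : Pr * Q = 0 := by
    rw [hQdef, mul_sub, mul_one, hproj, sub_self]
  have hrangeQ : LinearMap.range Q.mulVecLin = LinearMap.ker Pr.mulVecLin := by
    apply le_antisymm
    · rintro _ ⟨y, rfl⟩
      rw [LinearMap.mem_ker, ← LinearMap.comp_apply, ← Matrix.mulVecLin_mul, hPrQ]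
      simp
    · intro x hx
      rw [LinearMap.mem_ker, Matrix.mulVecLin_apply] at hx
      refine ⟨x, ?_⟩
      rw [Matrix.mulVecLin_apply, hQdef, Matrix.sub_mulVec, Matrix.one_mulVec, hx, sub_zero]
  have hrankQ : Q.rank = k - 1 := by
    have h1 := LinearMap.finrank_range_add_finrank_ker Pr.mulVecLin
    rw [Module.finrank_pi ℝ, Fintype.card_fin] at h1
    have h2 : Pr.rank = Module.finrank ℝ (LinearMap.range Pr.mulVecLin) := rfl
    have h3 : Q.rank = Module.finrank ℝ (LinearMap.ker Pr.mulVecLin) := by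
      rw [Matrix.rank, hrangeQ]
    omega
  -- the kernel subspace F
  set F : Submodule ℝ ({j // j ∈ S} → ℝ) := LinearMap.ker (Q * A).mulVecLin with hF
  have hcard : Fintype.card {j // j ∈ S} = s := by rw [Fintype.card_coe, hs]
  have hdimF : s ≤ 2 * Module.finrank ℝ F := by
    have h1 := LinearMap.finrank_range_add_finrank_ker (Q * A).mulVecLin
    rw [Module.finrank_pi ℝ, hcard] at h1
    have h2 : (Q * A).rank ≤ Q.rank := Matrix.rank_mul_le_left Q A
    have h3 : (Q * A).rank = Module.finrank ℝ (LinearMap.range (Q * A).mulVecLin) := rfl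
    have h4 : Module.finrank ℝ F = Module.finrank ℝ (LinearMap.ker (Q * A).mulVecLin) := rfl
    omega
  -- E := EuclideanSpace; view F inside E
  set F' : Submodule ℝ (EuclideanSpace ℝ {j // j ∈ S}) :=
    F.comap (WithLp.linearEquiv 2 ℝ ({j // j ∈ S} → ℝ)).toLinearMap with hF'
  set d : ℕ := Module.finrank ℝ F' with hd
  have hdF : d = Module.finrank ℝ F := by
    rw [hd, hF', Submodule.comap_equiv_eq_map_symm, LinearEquiv.finrank_map_eq]
  set b : OrthonormalBasis (Fin d) ℝ F' := stdOrthonormalBasis ℝ F' with hb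
  have hon : Orthonormal ℝ (fun j : Fin d => ((b j : EuclideanSpace ℝ {j // j ∈ S}))) :=
    b.orthonormal.comp_linearIsometry F'.subtypeₗᵢ
  -- each basis vector, as a plain function
  set f : Fin d → ({j // j ∈ S} → ℝ) := fun j => ((b j : EuclideanSpace ℝ {j // j ∈ S}) :
    {j // j ∈ S} → ℝ) with hfdef
  have hfF : ∀ j, f j ∈ F := fun j => (b j).2
  have hfnorm : ∀ j, _root_.enorm (f j) = 1 := by
    intro j
    rw [enorm_eq_norm]
    exact hon.1 j
  -- On F, C acts like A
  have hCA : ∀ j, C.mulVec (f j) = A.mulVec (f j) := by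
    intro j
    have h0 : (Q * A).mulVec (f j) = 0 := by
      have h0' : (Q * A).mulVecLin (f j) = 0 := LinearMap.mem_ker.mp (hfF j)
      rwa [Matrix.mulVecLin_apply] at h0'
    have h1 : (Q * A).mulVec (f j) = A.mulVec (f j) - C.mulVec (f j) := by
      rw [hQdef, hC, Matrix.sub_mul, Matrix.one_mul, Matrix.sub_mulVec]
    exact (sub_eq_zero.mp (h1.symm.trans h0)).symm
  -- each basis vector is mapped to a vector of norm at least σ
  have hlow : ∀ j, σ ^ 2 ≤ _root_.enorm (C.mulVec (f j)) ^ 2 := by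
    intro j
    have h1 : σ * _root_.enorm (f j) ≤ _root_.enorm (A.mulVec (f j)) := smin_le_enorm_mulVec A (f j)
    rw [hfnorm j, mul_one, ← hCA j] at h1
    exact pow_le_pow_left₀ (smin_nonneg A) h1 2
  -- Bessel: the images of the orthonormal family have total square norm at most Frobenius
  have hbessel : ∑ j : Fin d, _root_.enorm (C.mulVec (f j)) ^ 2 ≤ ∑ p : {j // j ∈ S}, ∑ l, C l p ^ 2 := by
    have hswap : ∑ p : {j // j ∈ S}, ∑ l, C l p ^ 2 = ∑ l, ∑ p : {j // j ∈ S}, C l p ^ 2 :=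
      Finset.sum_comm
    rw [hswap]
    have hterm : ∀ j : Fin d, _root_.enorm (C.mulVec (f j)) ^ 2
        = ∑ l, (C.mulVec (f j) l) ^ 2 := fun j => enorm_sq _
    calc ∑ j : Fin d, _root_.enorm (C.mulVec (f j)) ^ 2
        = ∑ j : Fin d, ∑ l, (C.mulVec (f j) l) ^ 2 := Finset.sum_congr rfl fun j _ => hterm j
      _ = ∑ l, ∑ j : Fin d, (C.mulVec (f j) l) ^ 2 := Finset.sum_comm
      _ ≤ ∑ l, ∑ p : {j // j ∈ S}, C l p ^ 2 := by
          apply Finset.sum_le_sum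
          intro l _
          set r : EuclideanSpace ℝ {j // j ∈ S} :=
            (WithLp.equiv 2 ({j // j ∈ S} → ℝ)).symm (fun p => C l p) with hr
          have hb1 := hon.sum_inner_products_le (𝕜 := ℝ) (x := r) (s := Finset.univ)
          have hinner : ∀ j : Fin d,
              (inner (𝕜 := ℝ) ((b j : EuclideanSpace ℝ {j // j ∈ S})) r) = C.mulVec (f j) l := by
            intro j
            rw [PiLp.inner_apply]
            simp only [RCLike.inner_apply, conj_trivial, hr, WithLp.equiv_symm_apply, PiLp.toLp_apply]
            rw [Matrix.mulVec]
            simp [dotProduct, mul_comm]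
            rfl
          have hnr : ‖r‖ ^ 2 = ∑ p : {j // j ∈ S}, C l p ^ 2 := by
            rw [EuclideanSpace.norm_eq]
            rw [Real.sq_sqrt (Finset.sum_nonneg fun p _ => sq_nonneg _)]
            simp [hr, WithLp.equiv_symm_apply, PiLp.toLp_apply, Real.norm_eq_abs, sq_abs]
          calc ∑ j : Fin d, (C.mulVec (f j) l) ^ 2
              = ∑ j : Fin d, ‖(inner (𝕜 := ℝ) ((b j : EuclideanSpace ℝ {j // j ∈ S})) r)‖ ^ 2 := by
                refine Finset.sum_congr rfl fun j _ => ?_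
                rw [hinner j, Real.norm_eq_abs, sq_abs]
            _ ≤ ‖r‖ ^ 2 := hb1
            _ = ∑ p : {j // j ∈ S}, C l p ^ 2 := hnr
  -- identify the Frobenius norm with the target sum
  have hfrob : ∑ p : {j // j ∈ S}, ∑ l, C l p ^ 2
      = ∑ i ∈ S, _root_.enorm (Pr.mulVec fun l => V l i) ^ 2 := by
    rw [← Finset.sum_coe_sort S (fun i => _root_.enorm (Pr.mulVec fun l => V l i) ^ 2)]
    refine Finset.sum_congr rfl fun p _ => ?_
    rw [enorm_sq]
    refine Finset.sum_congr rfl fun l _ => ?_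
    congr 1
  -- putting everything together
  have hdsum : (d : ℝ) * σ ^ 2 ≤ ∑ i ∈ S, _root_.enorm (Pr.mulVec fun l => V l i) ^ 2 := by
    rw [← hfrob]
    calc (d : ℝ) * σ ^ 2 = ∑ _j : Fin d, σ ^ 2 := by
          rw [Finset.sum_const, Finset.card_univ, Fintype.card_fin, nsmul_eq_mul]
      _ ≤ ∑ j : Fin d, _root_.enorm (C.mulVec (f j)) ^ 2 := Finset.sum_le_sum fun j _ => hlow j
      _ ≤ ∑ p : {j // j ∈ S}, ∑ l, C l p ^ 2 := hbessel
  have hsd : (s : ℝ) ≤ 2 * d := by rw [hdF]; exact_mod_cast hdimF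
  have hkey : (s : ℝ) * (σ ^ 2 / 2) ≤ ∑ i ∈ S, _root_.enorm (Pr.mulVec fun l => V l i) ^ 2 := by
    have hσ2 : 0 ≤ σ ^ 2 := sq_nonneg σ
    nlinarith [hdsum]
  have hspos : (0 : ℝ) < s := by exact_mod_cast hs0
  constructor
  · have := mul_le_mul_of_nonneg_left hkey (le_of_lt (one_div_pos.mpr hspos))
    calc σ ^ 2 / 2 = (1 / (s : ℝ)) * ((s : ℝ) * (σ ^ 2 / 2)) := by field_simp
      _ ≤ (1 / (s : ℝ)) * ∑ i ∈ S, _root_.enorm (Pr.mulVec fun l => V l i) ^ 2 := this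
  · apply Finset.exists_le_of_sum_le
    · rw [← Finset.card_pos, ← hs]; exact hs0
    · calc ∑ _i ∈ S, σ ^ 2 / 2 = (s : ℝ) * (σ ^ 2 / 2) := by
            rw [Finset.sum_const, ← hs, nsmul_eq_mul]
        _ ≤ ∑ i ∈ S, _root_.enorm (Pr.mulVec fun l => V l i) ^ 2 := hkey
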